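/- arXiv:2009.11062 — 2 statements merged into one kernel-verified Lean document; each statement's English description precedes it below -/
import Mathlib

section
/- Let g, r be natural numbers with r ≤ 2g, and let λ_0, …, λ_{2g+1} be distinct complex numbers. If x = (x_0, …, x_{2g+1}) ∈ ℂ^{2g+2} is a nonzero vector satisfying Σ_{j=0}^{2g+1} λ_j^i x_j^2 = 0 for every i = 0, …, r, then the set {j : x_j ≠ 0} has cardinality at least r + 2. -/
set_option maxHeartbeats 1000000


open Finset Matrix

/-- A nonzero common zero of the quadrics `q_i(x) = ∑_j λ_j^i x_j^2`,
`i = 0, …, r`, with the `λ_j` distinct, has at least `r + 2` nonzero coordinates. -/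
theorem support_bound_of_common_zero (g r : ℕ) (hr : r ≤ 2 * g)
    (lam : Fin (2 * g + 2) → ℂ) (hlam : Function.Injective lam)
    (x : Fin (2 * g + 2) → ℂ) (hx : x ≠ 0)
    (hq : ∀ i : ℕ, i ≤ r → ∑ j, lam j ^ i * x j ^ 2 = 0) :
    r + 2 ≤ (Finset.univ.filter fun j => x j ≠ 0).card := by
  by_contra hcard
  push_neg at hcard
  set S : Finset (Fin (2 * g + 2)) := Finset.univ.filter fun j => x j ≠ 0 with hS
  have hn : S.card ≤ r + 1 := by omega
  -- enumerate S
  set n := S.card with hncard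
  let e : S ≃ Fin n := S.equivFin
  let μ : Fin n → ℂ := fun k => lam (e.symm k : Fin (2 * g + 2))
  have hμ : Function.Injective μ := by
    intro a b hab
    have := hlam hab
    exact e.symm.injective (Subtype.ext this)
  let v : Fin n → ℂ := fun k => x (e.symm k : Fin (2 * g + 2)) ^ 2
  let A : Matrix (Fin n) (Fin n) ℂ := fun i k => μ k ^ (i : ℕ)
  have hA : A = (Matrix.vandermonde μ)ᵀ := by
    ext i k; simp [A, Matrix.vandermonde, Matrix.transpose]
  have hdet : A.det ≠ 0 := by
    rw [hA, Matrix.det_transpose, Matrix.det_vandermonde]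
    refine Finset.prod_ne_zero_iff.2 fun i _ => Finset.prod_ne_zero_iff.2 fun j hj => ?_
    have hne : i ≠ j := (Finset.mem_Ioi.mp hj).ne
    exact sub_ne_zero.2 fun h => hne (hμ h).symm
  have hmv : A.mulVec v = 0 := by
    funext i
    have hsum : ∑ j ∈ S, lam j ^ (i : ℕ) * x j ^ 2 = 0 := by
      have := hq i (by have := i.2; omega)
      rw [← this]
      refine Finset.sum_subset (Finset.subset_univ S) fun j _ hjS => ?_
      have : x j = 0 := by
        by_contra h
        exact hjS (by simp [hS, h])
      simp [this]
    calc A.mulVec v i = ∑ k, μ k ^ (i : ℕ) * v k := by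
          simp [Matrix.mulVec, dotProduct, A]
      _ = ∑ j : S, lam (j : Fin (2 * g + 2)) ^ (i : ℕ) * x (j : Fin (2 * g + 2)) ^ 2 := by
          rw [← Equiv.sum_comp e.symm
            (fun j : S => lam (j : Fin (2 * g + 2)) ^ (i : ℕ) * x (j : Fin (2 * g + 2)) ^ 2)]
      _ = ∑ j ∈ S, lam j ^ (i : ℕ) * x j ^ 2 := Finset.sum_coe_sort S (fun j => lam j ^ (i : ℕ) * x j ^ 2)
      _ = 0 := hsum
  have hv : v = 0 := by
    have hinj : Function.Injective A.mulVec :=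
      Matrix.mulVec_injective_iff_isUnit.2
        ((Matrix.isUnit_iff_isUnit_det A).2 (isUnit_iff_ne_zero.2 hdet))
    have := hinj (a₂ := 0) (by simpa using hmv)
    exact this
  -- x ≠ 0 gives a nonzero coordinate
  obtain ⟨j, hj⟩ : ∃ j, x j ≠ 0 := by
    by_contra h; push_neg at h; exact hx (funext h)
  have hjS : j ∈ S := by simp [hS, hj]
  have : v (e ⟨j, hjS⟩) = 0 := by rw [hv]; rfl
  have : x j ^ 2 = 0 := by simpa [v] using this
  exact hj (pow_eq_zero_iff (by norm_num) |>.mp this)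
end

section
/- Let g, r be natural numbers with r ≤ 2g, and let λ_0, …, λ_{2g+1} be distinct complex numbers. If x ∈ ℂ^{2g+2} is a nonzero vector satisfying Σ_{j=0}^{2g+1} λ_j^i x_j^2 = 0 for every i = 0, …, r, then the (r+1) × (2g+2) matrix M with entries M_{i,j} = λ_j^i · x_j has rank exactly r + 1. -/
open Finset

/-- At any nonzero common zero `x` of the quadrics `q_i(x) = ∑_j λ_j^i x_j^2`,
`i = 0, …, r` (with the `λ_j` distinct), the `(r+1) × (2g+2)` matrix `M_{i,j} = λ_j^i x_j`
has rank exactly `r + 1`. -/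
theorem jacobian_full_rank (g r : ℕ) (hr : r ≤ 2 * g)
    (lam : Fin (2 * g + 2) → ℂ) (hlam : Function.Injective lam)
    (x : Fin (2 * g + 2) → ℂ) (hx : x ≠ 0)
    (hq : ∀ i : ℕ, i ≤ r → ∑ j, lam j ^ i * x j ^ 2 = 0) :
    (Matrix.of fun (i : Fin (r + 1)) (j : Fin (2 * g + 2)) =>
      lam j ^ (i : ℕ) * x j).rank = r + 1 := by
  classical
  set S : Finset (Fin (2 * g + 2)) := Finset.univ.filter (fun j => x j ≠ 0) with hSdef
  -- Key: the moment conditions kill ∑ x_j² P(λ_j) for every P of degree ≤ r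
  have key : ∀ P : Polynomial ℂ, P.natDegree ≤ r →
      ∑ j, x j ^ 2 * P.eval (lam j) = 0 := by
    intro P hP
    have hev : ∀ j, P.eval (lam j) =
        ∑ i ∈ Finset.range (r + 1), P.coeff i * lam j ^ i := fun j =>
      Polynomial.eval_eq_sum_range' (Nat.lt_succ_of_le hP) _
    simp_rw [hev, Finset.mul_sum]
    rw [Finset.sum_comm]
    refine Finset.sum_eq_zero fun i hi => ?_
    have h0 := hq i (Nat.lt_succ_iff.mp (Finset.mem_range.mp hi))
    calc ∑ j, x j ^ 2 * (P.coeff i * lam j ^ i)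
        = P.coeff i * ∑ j, lam j ^ i * x j ^ 2 := by
          rw [Finset.mul_sum]; exact Finset.sum_congr rfl fun j _ => by ring
      _ = 0 := by rw [h0, mul_zero]
  -- x has at least r+2 nonzero coordinates
  have hScard : r + 2 ≤ S.card := by
    by_contra hcard
    push_neg at hcard
    obtain ⟨j0, hj0⟩ : ∃ j, x j ≠ 0 := by
      by_contra h; push_neg at h; exact hx (funext h)
    have hj0S : j0 ∈ S := by simp [hSdef, hj0]
    set P : Polynomial ℂ := ∏ j ∈ S.erase j0, (Polynomial.X - Polynomial.C (lam j)) with hPdef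
    have hdeg : P.natDegree ≤ r := by
      have h1 : P.natDegree = (S.erase j0).card := by
        rw [hPdef, Polynomial.natDegree_prod _ _ (fun j _ => Polynomial.X_sub_C_ne_zero _)]
        simp [Polynomial.natDegree_X_sub_C]
      rw [h1, Finset.card_erase_of_mem hj0S]
      omega
    have hsum := key P hdeg
    have hsum' : ∑ j, x j ^ 2 * P.eval (lam j) = x j0 ^ 2 * P.eval (lam j0) := by
      refine Finset.sum_eq_single j0 (fun j _ hj => ?_) (fun h => absurd (Finset.mem_univ j0) h)
      by_cases hxj : x j = 0
      · rw [hxj]; ring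
      · have hjS : j ∈ S := by simp [hSdef, hxj]
        have : P.eval (lam j) = 0 := by
          rw [hPdef, Polynomial.eval_prod]
          exact Finset.prod_eq_zero (Finset.mem_erase.mpr ⟨hj, hjS⟩) (by simp)
        rw [this, mul_zero]
    rw [hsum'] at hsum
    have hP0 : P.eval (lam j0) ≠ 0 := by
      rw [hPdef, Polynomial.eval_prod]
      refine Finset.prod_ne_zero_iff.mpr fun j hj => ?_
      have hjne : j ≠ j0 := (Finset.mem_erase.mp hj).1
      simp only [Polynomial.eval_sub, Polynomial.eval_X, Polynomial.eval_C, sub_ne_zero]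
      exact fun h => hjne (hlam h.symm)
    exact hj0 ((pow_eq_zero_iff (two_ne_zero)).mp
      ((mul_eq_zero.mp hsum).resolve_right hP0))
  -- rows of M are linearly independent
  have hLI : LinearIndependent ℂ (fun (i : Fin (r + 1)) =>
      (Matrix.of fun (i : Fin (r + 1)) (j : Fin (2 * g + 2)) =>
        lam j ^ (i : ℕ) * x j) i) := by
    rw [Fintype.linearIndependent_iff]
    intro c hc k
    set Q : Polynomial ℂ := ∑ i : Fin (r + 1), Polynomial.C (c i) * Polynomial.X ^ (i : ℕ)
      with hQdef
    have hQdeg : Q.natDegree ≤ r := by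
      refine Polynomial.natDegree_sum_le_of_forall_le _ _ fun i _ => ?_
      refine le_trans (Polynomial.natDegree_C_mul_le _ _) ?_
      rw [Polynomial.natDegree_X_pow]
      omega
    have hQeval : ∀ j ∈ S, Q.eval (lam j) = 0 := by
      intro j hjS
      have hxj : x j ≠ 0 := by simpa [hSdef] using hjS
      have hj := congrFun hc j
      simp only [Finset.sum_apply, Pi.smul_apply, Matrix.of_apply, smul_eq_mul,
        Pi.zero_apply] at hj
      have : Q.eval (lam j) * x j = 0 := by
        rw [hQdef]
        simp only [Polynomial.eval_finset_sum, Polynomial.eval_mul, Polynomial.eval_C,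
          Polynomial.eval_pow, Polynomial.eval_X, Finset.sum_mul]
        rw [← hj]
        exact Finset.sum_congr rfl fun i _ => by ring
      exact (mul_eq_zero.mp this).resolve_right hxj
    have hQ0 : Q = 0 := by
      refine Polynomial.eq_zero_of_natDegree_lt_card_of_eval_eq_zero' Q (S.image lam)
        (fun y hy => ?_) ?_
      · obtain ⟨j, hjS, rfl⟩ := Finset.mem_image.mp hy
        exact hQeval j hjS
      · rw [Finset.card_image_of_injective _ hlam]
        omega
    have := congrArg (fun p => Polynomial.coeff p (k : ℕ)) hQ0
    simp only [hQdef, Polynomial.finset_sum_coeff, Polynomial.coeff_C_mul,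
      Polynomial.coeff_X_pow, Polynomial.coeff_zero, mul_ite, mul_one, mul_zero] at this
    rwa [Finset.sum_eq_single k (fun i _ hik => if_neg (fun h => hik (Fin.ext h.symm)))
      (fun h => absurd (Finset.mem_univ k) h), if_pos rfl] at this
  have := hLI.rank_matrix
  simpa using this
end
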